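/- For all integers n ≥ 1 and m ≥ 1, the map ((i, j), (b, c)) ↦ '(' ++ b ++ ')' ++ c is a bijection from the disjoint union, over pairs of integers (i, j) with 0 ≤ i ≤ m-1 and 2i ≤ j ≤ n - 2(m-i) - 1, of the products A_{n-2-j, m-1-i} × A_{j, i}, onto the subset of A_{n, m} consisting of those words whose first symbol is '('. Moreover, for such a word a = '(' ++ b ++ ')' ++ c with b of length n-2-j, the ')' at position n - j is the matching bracket of the initial '(' of a. -/

import Mathlib

/-- The alphabet {'(', ')', '*'} for RNA secondary structure words. -/
inductive RSym : Type
  | op : RSym   -- '('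
  | cl : RSym   -- ')'
  | st : RSym   -- '*'
  deriving DecidableEq

/-- `isRNA n m a` : `a` is an RNA secondary structure word of length `n` with `m` base-pairs. -/
def isRNA (n m : ℕ) (a : List RSym) : Prop :=
  a.length = n ∧
  a.count RSym.op = m ∧
  a.count RSym.cl = m ∧
  (∀ p : ℕ, (a.take p).count RSym.cl ≤ (a.take p).count RSym.op) ∧
  ¬ ([RSym.op, RSym.cl] <:+: a)

/-- The set `A_{n,m}` of RNA secondary structure words, as a type. -/
def RNAset (n m : ℕ) : Type := {a : List RSym // isRNA n m a}

/-- The index set of pairs `(i, j)` with `0 ≤ i ≤ m - 1` and `2i ≤ j ≤ n - 2(m - i) - 1`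
(the bounds being read over the integers). -/
def Idx (n m : ℕ) : Type :=
  {p : ℕ × ℕ // (p.1 : ℤ) ≤ (m : ℤ) - 1 ∧ 2 * p.1 ≤ p.2 ∧
    (p.2 : ℤ) ≤ (n : ℤ) - 2 * ((m : ℤ) - (p.1 : ℤ)) - 1}

/-- The map `((i,j),(b,c)) ↦ '(' ++ b ++ ')' ++ c` on the disjoint union over `(i,j)` of the
products `A_{n-2-j, m-1-i} × A_{j, i}`. -/
def glue (n m : ℕ)
    (q : Σ p : Idx n m, RNAset (n - 2 - p.1.2) (m - 1 - p.1.1) × RNAset p.1.2 p.1.1) :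
    List RSym :=
  RSym.op :: q.2.1.1 ++ RSym.cl :: q.2.2.1

section Aux

open List

lemma sum_counts (l : List RSym) :
    l.count RSym.op + l.count RSym.cl + l.count RSym.st = l.length := by
  induction l with
  | nil => simp
  | cons x l ih => cases x <;> simp [List.count_cons] <;> omega

lemma infix_iff (a : List RSym) :
    [RSym.op, RSym.cl] <:+: a ↔
      ∃ k, a[k]? = some RSym.op ∧ a[k+1]? = some RSym.cl := by
  constructor
  · rintro ⟨s, t, rfl⟩
    refine ⟨s.length, ?_, ?_⟩
    · rw [List.append_assoc, List.getElem?_append_right le_rfl]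
      simp
    · rw [List.append_assoc, List.getElem?_append_right (by omega)]
      simp
  · rintro ⟨k, h1, h2⟩
    obtain ⟨hk, g1⟩ := List.getElem?_eq_some_iff.1 h1
    obtain ⟨hk2, g2⟩ := List.getElem?_eq_some_iff.1 h2
    refine ⟨a.take k, a.drop (k+2), ?_⟩
    rw [List.append_assoc]
    conv_rhs => rw [← List.take_append_drop k a]
    congr 1
    rw [List.drop_eq_getElem_cons hk, List.drop_eq_getElem_cons hk2]
    rw [g1, g2]
    rfl

lemma takeA (b c : List RSym) {p : ℕ} (h1 : 1 ≤ p) (h2 : p ≤ b.length + 1) :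
    (RSym.op :: b ++ RSym.cl :: c).take p = RSym.op :: b.take (p-1) := by
  obtain ⟨q, rfl⟩ := Nat.exists_eq_add_of_le h1
  rw [show RSym.op :: b ++ RSym.cl :: c = RSym.op :: (b ++ RSym.cl :: c) from rfl]
  rw [show 1 + q = q + 1 from by omega, List.take_succ_cons,
    List.take_append, show q - b.length = 0 from by omega]
  simp

lemma takeB (b c : List RSym) {p : ℕ} (h : b.length + 2 ≤ p) :
    (RSym.op :: b ++ RSym.cl :: c).take p
      = RSym.op :: b ++ RSym.cl :: c.take (p - b.length - 2) := by
  obtain ⟨q, rfl⟩ := Nat.exists_eq_add_of_le h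
  rw [show RSym.op :: b ++ RSym.cl :: c = RSym.op :: (b ++ RSym.cl :: c) from rfl]
  rw [show b.length + 2 + q = (b.length + 1 + q) + 1 from by omega, List.take_succ_cons,
    List.take_append, show b.length + 1 + q - b.length = q + 1 from by omega,
    List.take_of_length_le (by omega), List.take_succ_cons]
  rw [show b.length + 1 + q + 1 - b.length - 2 = q from by omega]
  rfl

lemma head_ne_cl {b : List RSym}
    (hpre : ∀ p, (b.take p).count RSym.cl ≤ (b.take p).count RSym.op) :
    b[0]? ≠ some RSym.cl := by
  intro h
  cases b with
  | nil => simp at h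
  | cons x b =>
    simp at h
    subst h
    have := hpre 1
    simp [List.count_cons] at this

lemma has_star {b : List RSym} {e : ℕ} (he : 1 ≤ e)
    (hop : b.count RSym.op = e) (hcl : b.count RSym.cl = e)
    (hpre : ∀ p, (b.take p).count RSym.cl ≤ (b.take p).count RSym.op)
    (hninf : ¬ [RSym.op, RSym.cl] <:+: b) :
    2 * e + 1 ≤ b.length := by
  classical
  have hmem : RSym.cl ∈ b := List.count_pos_iff.1 (by omega)
  have hex : ∃ k, b[k]? = some RSym.cl := List.mem_iff_getElem?.1 hmem
  set k := Nat.find hex with hkdef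
  have hk : b[k]? = some RSym.cl := Nat.find_spec hex
  have hk1 : 1 ≤ k := by
    rcases Nat.eq_zero_or_pos k with h0 | h
    · exact absurd (h0 ▸ hk) (head_ne_cl hpre)
    · exact h
  have hklen : k < b.length := (List.getElem?_eq_some_iff.1 hk).1
  obtain ⟨x, hxe⟩ : ∃ x, b[k-1]? = some x := by
    exact ⟨_, List.getElem?_eq_getElem (by omega)⟩
  have hxcl : x ≠ RSym.cl := by
    rintro rfl
    exact Nat.find_min hex (show k - 1 < k by omega) hxe
  have hxop : x ≠ RSym.op := by
    rintro rfl
    exact hninf ((infix_iff b).2 ⟨k-1, hxe, by rw [show k-1+1 = k from by omega]; exact hk⟩)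
  have hxst : x = RSym.st := by cases x <;> simp_all
  subst hxst
  have hst : RSym.st ∈ b := List.mem_iff_getElem?.2 ⟨k-1, hxe⟩
  have h1 : 1 ≤ b.count RSym.st := List.count_pos_iff.2 hst
  have := sum_counts b
  omega

lemma idx_facts {n m : ℕ} (hm : 1 ≤ m) (p : Idx n m) :
    p.1.1 + 1 ≤ m ∧ 2 * p.1.1 ≤ p.1.2 ∧ p.1.2 + 2 * (m - p.1.1) + 1 ≤ n := by
  obtain ⟨⟨i, j⟩, h1, h2, h3⟩ := p
  simp only at *
  omega

lemma part3 (n m : ℕ) (hm : 1 ≤ m)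
    (q : Σ p : Idx n m, RNAset (n - 2 - p.1.2) (m - 1 - p.1.1) × RNAset p.1.2 p.1.1) :
    IsLeast {p : ℕ | 1 < p ∧
        ((glue n m q).take p).count RSym.op = ((glue n m q).take p).count RSym.cl}
      (n - q.1.1.2) ∧
    (glue n m q)[n - q.1.1.2 - 1]? = some RSym.cl := by
  obtain ⟨⟨⟨i, j⟩, hij⟩, ⟨b, hb⟩, ⟨c, hc⟩⟩ := q
  obtain ⟨hi1, hi2, hi3⟩ := idx_facts hm ⟨⟨i, j⟩, hij⟩
  obtain ⟨hbl, hbo, hbc, hbp, hbn⟩ := hb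
  simp only [glue]
  have hjn : j + 3 ≤ n := by omega
  have hbl' : b.length = n - 2 - j := hbl
  have hNeq : n - j = b.length + 2 := by omega
  refine ⟨⟨⟨by omega, ?_⟩, ?_⟩, ?_⟩
  · rw [hNeq, takeB b c le_rfl]
    simp [List.count_append, List.count_cons, hbo, hbc]
  · rintro p ⟨hp1, hp2⟩
    by_contra hlt
    push_neg at hlt
    rw [takeA b c (by omega) (by omega)] at hp2
    have := hbp (p - 1)
    simp [List.count_cons] at hp2
    omega
  · rw [show n - j - 1 = b.length + 1 from by omega,
      show (RSym.op :: b ++ RSym.cl :: c) = RSym.op :: (b ++ RSym.cl :: c) from rfl,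
      List.getElem?_cons_succ, List.getElem?_append_right le_rfl]
    simp

end Aux

theorem glue_bijection (n m : ℕ) (hn : 1 ≤ n) (hm : 1 ≤ m) :
    Function.Injective (glue n m) ∧
      Set.range (glue n m) = {a : List RSym | isRNA n m a ∧ a.head? = some RSym.op} ∧
      ∀ q : Σ p : Idx n m, RNAset (n - 2 - p.1.2) (m - 1 - p.1.1) × RNAset p.1.2 p.1.1,
        IsLeast {p : ℕ | 1 < p ∧
            ((glue n m q).take p).count RSym.op = ((glue n m q).take p).count RSym.cl}
          (n - q.1.1.2) ∧
        (glue n m q)[n - q.1.1.2 - 1]? = some RSym.cl := by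
  refine ⟨?_, ?_, fun q => part3 n m hm q⟩
  · -- injectivity
    intro q q' h
    have L := (part3 n m hm q).1
    have L' := (part3 n m hm q').1
    rw [h] at L
    have hN : n - q'.1.1.2 = n - q.1.1.2 := L'.unique L
    obtain ⟨hq1, hq2, hq3⟩ := idx_facts hm q.1
    obtain ⟨hq1', hq2', hq3'⟩ := idx_facts hm q'.1
    obtain ⟨⟨⟨i, j⟩, hij⟩, ⟨b, hb⟩, ⟨c, hc⟩⟩ := q
    obtain ⟨⟨⟨i', j'⟩, hij'⟩, ⟨b', hb'⟩, ⟨c', hc'⟩⟩ := q'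
    simp only at hN hq1 hq2 hq3 hq1' hq2' hq3'
    have hjj : j = j' := by omega
    subst hjj
    simp only [glue, List.cons.injEq, true_and] at h
    have hbl : b.length = n - 2 - j := hb.1
    have hbl' : b'.length = n - 2 - j := hb'.1
    obtain ⟨hbb, hcc⟩ := List.append_inj h (by simp [hbl, hbl'])
    have hbb' : b = b' := by injection hbb
    subst hbb'
    have hcc' : c = c' := by injection hcc
    subst hcc'
    have hii : i = i' := by
      have e1 : c.count RSym.op = i := hc.2.1
      have e2 : c.count RSym.op = i' := hc'.2.1
      omega
    subst hii
    rfl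
  · -- range characterization
    ext a
    simp only [Set.mem_range, Set.mem_setOf_eq]
    constructor
    · rintro ⟨q, rfl⟩
      obtain ⟨hq1, hq2, hq3⟩ := idx_facts hm q.1
      obtain ⟨⟨⟨i, j⟩, hij⟩, ⟨b, hb⟩, ⟨c, hc⟩⟩ := q
      simp only at hq1 hq2 hq3
      obtain ⟨hbl, hbo, hbc, hbp, hbn⟩ := hb
      obtain ⟨hcl, hco, hcc, hcp, hcn⟩ := hc
      have hbl' : b.length = n - 2 - j := hbl
      have hbo' : b.count RSym.op = m - 1 - i := hbo
      have hbc' : b.count RSym.cl = m - 1 - i := hbc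
      have hcl' : c.length = j := hcl
      have hco' : c.count RSym.op = i := hco
      have hcc' : c.count RSym.cl = i := hcc
      have hblen1 : 1 ≤ b.length := by omega
      simp only [glue]
      refine ⟨⟨?_, ?_, ?_, ?_, ?_⟩, rfl⟩
      · simp only [List.length_append, List.length_cons]
        omega
      · simp only [List.count_append, List.count_cons]
        simp [hbo', hco']
        omega
      · simp only [List.count_append, List.count_cons]
        simp [hbc', hcc']
        omega
      · intro p
        rcases Nat.lt_or_ge p 1 with h | h
        · interval_cases p; simp
        rcases Nat.lt_or_ge p (b.length + 2) with h2 | h2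
        · rw [takeA b c h (by omega)]
          have := hbp (p - 1)
          simp only [List.count_cons]
          simp
          omega
        · rw [takeB b c h2]
          have := hcp (p - b.length - 2)
          simp only [List.count_append, List.count_cons]
          simp [hbo', hbc']
          omega
      · rw [infix_iff]
        rintro ⟨k, g1, g2⟩
        rw [show (RSym.op :: b ++ RSym.cl :: c) = RSym.op :: (b ++ RSym.cl :: c) from rfl] at g1 g2
        cases k with
        | zero =>
          rw [List.getElem?_cons_succ, List.getElem?_append_left (by omega)] at g2
          exact head_ne_cl hbp g2
        | succ k' =>
          rw [List.getElem?_cons_succ] at g1 g2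
          rcases Nat.lt_or_ge k' b.length with hk | hk
          · rw [List.getElem?_append_left hk] at g1
            rcases Nat.lt_or_ge (k' + 1) b.length with hk2 | hk2
            · rw [List.getElem?_append_left hk2] at g2
              exact hbn ((infix_iff b).2 ⟨k', g1, g2⟩)
            · -- k' + 1 = b.length : b ends with op, contradiction with prefix cond
              have hk2' : k' + 1 = b.length := by omega
              have hdec : b = b.take k' ++ [RSym.op] := by
                conv_lhs => rw [← List.take_append_drop k' b]
                congr 1
                obtain ⟨hkl, g⟩ := List.getElem?_eq_some_iff.1 g1
                rw [List.drop_eq_getElem_cons hkl, hk2', List.drop_length]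
                rw [g]
              have e1 : b.count RSym.op = (b.take k').count RSym.op + 1 := by
                conv_lhs => rw [hdec]
                simp [List.count_append]
              have e2 : b.count RSym.cl = (b.take k').count RSym.cl := by
                conv_lhs => rw [hdec]
                simp [List.count_append]
              have := hbp k'
              omega
          · rcases Nat.eq_or_lt_of_le hk with he | hlt'
            · rw [List.getElem?_append_right hk, ← he, Nat.sub_self] at g1
              simp at g1
            · rw [List.getElem?_append_right hk,
                show k' - b.length = (k' - b.length - 1) + 1 from by omega,
                List.getElem?_cons_succ] at g1
              rw [List.getElem?_append_right (by omega),
                show k' + 1 - b.length = (k' - b.length - 1) + 1 + 1 from by omega,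
                List.getElem?_cons_succ] at g2
              exact hcn ((infix_iff c).2 ⟨k' - b.length - 1, g1, g2⟩)
    · rintro ⟨ha, hhead⟩
      obtain ⟨hlen, hopct, hclct, hpre, hninf⟩ := ha
      obtain ⟨t, rfl⟩ : ∃ t, a = RSym.op :: t := by
        cases a with
        | nil => simp at hhead
        | cons x t =>
          simp only [List.head?_cons, Option.some.injEq] at hhead
          exact ⟨t, by rw [hhead]⟩
      have htl : t.length = n - 1 := by
        simp only [List.length_cons] at hlen
        omega
      have hto : t.count RSym.op + 1 = m := by
        simp [List.count_cons] at hopct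
        omega
      have htc : t.count RSym.cl = m := by
        simp [List.count_cons] at hclct
        omega
      have hn2 : m + m ≤ n := by
        have := sum_counts (RSym.op :: t)
        simp [List.count_cons, List.length_cons] at this
        omega
      classical
      set S : Set ℕ := {p : ℕ | 1 < p ∧
        ((RSym.op :: t).take p).count RSym.op = ((RSym.op :: t).take p).count RSym.cl}
        with hS
      have hnS : n ∈ S := by
        rw [hS]
        refine ⟨by omega, ?_⟩
        rw [List.take_of_length_le (le_of_eq hlen), hopct, hclct]
      have hp0mem := Nat.sInf_mem (⟨n, hnS⟩ : Set.Nonempty S)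
      have hp0gt : 1 < sInf S := hp0mem.1
      have hp0eq : ((RSym.op :: t).take (sInf S)).count RSym.op
          = ((RSym.op :: t).take (sInf S)).count RSym.cl := hp0mem.2
      have hp0le : sInf S ≤ n := Nat.sInf_le hnS
      obtain ⟨r, hrp⟩ : ∃ r, sInf S = r + 1 := ⟨sInf S - 1, by omega⟩
      have hr1 : 1 ≤ r := by omega
      have hstrict : ∀ p, 1 ≤ p → p < sInf S →
          ((RSym.op :: t).take p).count RSym.cl < ((RSym.op :: t).take p).count RSym.op := by
        intro p h1 h2
        rcases Nat.eq_or_lt_of_le h1 with he | h1'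
        · rw [← he]
          simp [List.count_cons]
        · have hne : p ∉ S := fun hmem => absurd (Nat.sInf_le hmem) (by omega)
          have hle := hpre p
          rw [hS] at hne
          simp only [Set.mem_setOf_eq, not_and] at hne
          have := hne h1'
          omega
      have hrt : r - 1 < t.length := by omega
      obtain ⟨x, hxg⟩ : ∃ x, t[r - 1]? = some x := by
        exact ⟨_, List.getElem?_eq_getElem hrt⟩
      have h2 : t.take r = t.take (r-1) ++ [x] := by
        conv_lhs => rw [show r = (r-1) + 1 from by omega]
        rw [List.take_succ, hxg]
        rfl
      have h1 : (RSym.op :: t).take (r + 1) = (RSym.op :: t.take (r-1)) ++ [x] := by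
        rw [List.take_succ_cons, h2]
        rfl
      rw [hrp] at hp0eq
      rw [h1, List.count_append, List.count_append] at hp0eq
      have hxcl : x = RSym.cl := by
        have hs := hstrict r (by omega) (by omega)
        rw [show r = (r-1) + 1 from by omega, List.take_succ_cons] at hs
        cases x
        · exfalso
          simp [List.count_cons] at hp0eq hs
          omega
        · rfl
        · exfalso
          simp [List.count_cons] at hp0eq hs
          omega
      subst hxcl
      have hbe : (t.take (r-1)).count RSym.op = (t.take (r-1)).count RSym.cl := by
        simp only [List.count_cons, List.count_nil, List.count_singleton] at hp0eq
        simp at hp0eq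
        omega
      have hdect : t = t.take (r-1) ++ RSym.cl :: t.drop r := by
        conv_lhs => rw [← List.take_append_drop (r-1) t]
        congr 1
        rw [List.drop_eq_getElem_cons hrt]
        obtain ⟨hh, he⟩ := List.getElem?_eq_some_iff.1 hxg
        rw [he, show r - 1 + 1 = r from by omega]
      set b := t.take (r - 1) with hbdef
      set c := t.drop r with hcdef
      have hbl : b.length = r - 1 := by
        rw [hbdef, List.length_take]
        omega
      have hcl : c.length = n - 1 - r := by
        rw [hcdef, List.length_drop]
        omega
      have hto2 : t.count RSym.op = b.count RSym.op + c.count RSym.op := by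
        rw [hdect]
        simp [List.count_append, List.count_cons]
      have htc2 : t.count RSym.cl = b.count RSym.cl + c.count RSym.cl + 1 := by
        rw [hdect]
        simp [List.count_append, List.count_cons]
        omega
      have him : b.count RSym.op + 1 + c.count RSym.op = m := by omega
      have hicl : c.count RSym.cl = c.count RSym.op := by omega
      have hbpre : ∀ p, (b.take p).count RSym.cl ≤ (b.take p).count RSym.op := by
        intro p
        rcases Nat.lt_or_ge p (r-1) with h | h
        · have hs := hstrict (p+1) (by omega) (by omega)
          rw [List.take_succ_cons] at hs
          have hbp2 : b.take p = t.take p := by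
            rw [hbdef, List.take_take]
            congr 1
            omega
          rw [hbp2]
          simp [List.count_cons] at hs
          omega
        · rw [List.take_of_length_le (by omega)]
          omega
      have hcpre : ∀ p, (c.take p).count RSym.cl ≤ (c.take p).count RSym.op := by
        intro p
        have hs := hpre (sInf S + p)
        rw [hrp, show r + 1 + p = (r + p) + 1 from by omega, List.take_succ_cons] at hs
        have ht2 : t.take (r + p) = b ++ RSym.cl :: c.take p := by
          conv_lhs => rw [hdect]
          rw [List.take_append, List.take_of_length_le (by omega),
            show r + p - b.length = p + 1 from by omega, List.take_succ_cons]
        rw [ht2] at hs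
        simp [List.count_append, List.count_cons] at hs
        omega
      have hbinf : ¬ [RSym.op, RSym.cl] <:+: b := by
        intro hinf
        exact hninf (hinf.trans ⟨[RSym.op], RSym.cl :: c, by rw [hdect]; simp⟩)
      have hcinf : ¬ [RSym.op, RSym.cl] <:+: c := by
        intro hinf
        exact hninf (hinf.trans ⟨RSym.op :: b ++ [RSym.cl], [], by rw [hdect]; simp⟩)
      have hblen1 : 1 ≤ b.length := by
        by_contra hcon
        push_neg at hcon
        have hb0 : b = [] := List.length_eq_zero_iff.1 (by omega)
        apply hninf
        exact ⟨[], c, by rw [hdect, hb0]; simp⟩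
      have hbstar : 2 * b.count RSym.op + 1 ≤ b.length := by
        rcases Nat.eq_zero_or_pos (b.count RSym.op) with he0 | he1
        · omega
        · exact has_star he1 rfl hbe.symm hbpre hbinf
      have hc2i : c.count RSym.op + c.count RSym.cl ≤ c.length := by
        have := sum_counts c
        omega
      have hlent : t.length = b.length + 1 + c.length := by
        conv_lhs => rw [hdect]
        simp
        omega
      refine ⟨⟨⟨⟨c.count RSym.op, c.length⟩, ?_, ?_, ?_⟩,
        ⟨b, ?_, ?_, ?_, hbpre, hbinf⟩, ⟨c, rfl, rfl, hicl, hcpre, hcinf⟩⟩, ?_⟩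
      · simp only
        omega
      · simp only
        omega
      · simp only
        omega
      · simp only
        omega
      · simp only
        omega
      · simp only
        omega
      · simp only [glue]
        rw [hdect]
        rfl
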